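/- arXiv:math-ph/0407034 — 5 statements merged into one kernel-verified Lean document; each statement's English description precedes it below -/
import Mathlib

section
/- For all integers a ≥ 1 and all integers b with |b| ≤ a, one has a^b e^{−b²/a} ≤ (a+b)!/a! ≤ a^b e^{b²/a}, where a^b denotes the real power (so that for negative b the bounds read a^{−|b|} e^{−b²/a} ≤ (a−|b|)!/a! ≤ a^{−|b|} e^{b²/a}). -/
open Finset Real

lemma fact_pos' (n : ℕ) : (0:ℝ) < (n.factorial : ℝ) := by
  exact_mod_cast n.factorial_pos

lemma prod_asc (a : ℕ) (n : ℕ) :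
    ∏ k ∈ Finset.range n, ((a:ℝ) + k + 1) = ((a+n).factorial : ℝ) / (a.factorial : ℝ) := by
  induction n with
  | zero => simp [div_self (fact_pos' a).ne']
  | succ n ih =>
      rw [Finset.prod_range_succ, ih]
      have h : ((a + (n+1)).factorial : ℝ) = ((a+n).factorial : ℝ) * ((a:ℝ) + n + 1) := by
        have h' : a + (n+1) = (a + n) + 1 := by ring
        rw [h', Nat.factorial_succ]
        push_cast; ring
      rw [h]; ring

lemma prod_desc (a : ℕ) : ∀ c : ℕ, c ≤ a →
    ∏ k ∈ Finset.range c, ((a:ℝ) - k) = (a.factorial : ℝ) / ((a - c).factorial : ℝ) := by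
  intro c
  induction c with
  | zero => simp [div_self (fact_pos' a).ne']
  | succ c ih =>
      intro h
      have hc : c ≤ a := Nat.le_of_succ_le h
      rw [Finset.prod_range_succ, ih hc]
      have hcast : ((a - (c+1) : ℕ) : ℝ) = (a:ℝ) - c - 1 := by
        rw [Nat.cast_sub h]; push_cast; ring
      have h2 : ((a - c).factorial : ℝ) = ((a - (c+1)).factorial : ℝ) * ((a:ℝ) - c) := by
        have h1 : a - c = (a - (c+1)) + 1 := by omega
        rw [h1, Nat.factorial_succ]
        push_cast [hcast]; ring
      rw [h2, div_mul_eq_div_div, div_mul_cancel₀]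
      have : (c:ℝ) < a := by exact_mod_cast h
      linarith

lemma up_bound (a n : ℕ) (ha : 1 ≤ a) :
    ∏ k ∈ Finset.range n, ((a:ℝ) + k + 1) ≤ (a:ℝ)^n * Real.exp ((n:ℝ)^2 / a) := by
  have hapos : (0:ℝ) < a := by exact_mod_cast ha
  have step : ∀ k ∈ Finset.range n, ((a:ℝ) + k + 1) ≤ (a:ℝ) * Real.exp ((n:ℝ)/a) := by
    intro k hk
    have hk' : (k:ℝ) + 1 ≤ n := by
      have := Finset.mem_range.mp hk; exact_mod_cast Nat.succ_le_of_lt this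
    have h1 : ((k:ℝ)+1)/a + 1 ≤ Real.exp (((k:ℝ)+1)/a) := Real.add_one_le_exp _
    have h2 : Real.exp (((k:ℝ)+1)/a) ≤ Real.exp ((n:ℝ)/a) :=
      Real.exp_le_exp.mpr (by gcongr)
    calc (a:ℝ) + k + 1 = a * (((k:ℝ)+1)/a + 1) := by field_simp; ring
      _ ≤ a * Real.exp (((k:ℝ)+1)/a) := by nlinarith
      _ ≤ a * Real.exp ((n:ℝ)/a) := by nlinarith [Real.exp_pos (((k:ℝ)+1)/a)]
  calc ∏ k ∈ Finset.range n, ((a:ℝ) + k + 1)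
      ≤ ∏ _k ∈ Finset.range n, ((a:ℝ) * Real.exp ((n:ℝ)/a)) := by
        apply Finset.prod_le_prod (fun k _ => by positivity) step
    _ = (a:ℝ)^n * Real.exp ((n:ℝ)/a)^n := by rw [Finset.prod_const, Finset.card_range, mul_pow]
    _ = (a:ℝ)^n * Real.exp ((n:ℝ)^2/a) := by
        rw [← Real.exp_nat_mul]; ring_nf

lemma prod_desc_pos (a c : ℕ) (h : c ≤ a) :
    0 < ∏ k ∈ Finset.range c, ((a:ℝ) - k) := by
  apply Finset.prod_pos
  intro k hk
  have hk' : k < a := lt_of_lt_of_le (Finset.mem_range.mp hk) h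
  have : (k:ℝ) < a := by exact_mod_cast hk'
  linarith

lemma m_step (m : ℕ) (hm : 1 ≤ m) :
    (m:ℝ)^m ≤ ((m-1:ℕ):ℝ)^(m-1) * m * Real.exp 1 := by
  obtain ⟨p, rfl⟩ : ∃ p, m = p + 1 := ⟨m - 1, by omega⟩
  simp only [Nat.add_sub_cancel]
  rcases Nat.eq_zero_or_pos p with hp | hp
  · subst hp; simpa using Real.one_le_exp (by norm_num)
  · have hpr : (0:ℝ) < p := by exact_mod_cast hp
    have hinv : (p:ℝ) * (1/(p:ℝ)) = 1 := by field_simp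
    have h1 : ((p:ℝ) + 1) ≤ p * Real.exp (1/(p:ℝ)) := by
      have := Real.add_one_le_exp (1/(p:ℝ))
      nlinarith
    have h2 : ((p:ℝ)+1)^p ≤ ((p:ℝ) * Real.exp (1/(p:ℝ)))^p :=
      pow_le_pow_left₀ (by positivity) h1 p
    have h3 : ((p:ℝ) * Real.exp (1/(p:ℝ)))^p = (p:ℝ)^p * Real.exp 1 := by
      rw [mul_pow, ← Real.exp_nat_mul, hinv]
    push_cast
    rw [pow_succ]
    nlinarith [h2.trans_eq h3, pow_nonneg hpr.le p, Real.exp_pos (1:ℝ)]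

lemma key_ind (a : ℕ) (ha : 1 ≤ a) : ∀ c : ℕ, c ≤ a →
    (a:ℝ)^a ≤ ((a-c:ℕ):ℝ)^(a-c) * (∏ k ∈ Finset.range c, ((a:ℝ) - k)) * Real.exp c := by
  intro c
  induction c with
  | zero => simp
  | succ c ih =>
      intro h
      have hc : c ≤ a := Nat.le_of_succ_le h
      have hm : 1 ≤ a - c := by omega
      have hmm : a - (c+1) = (a - c) - 1 := by omega
      have hcast : ((a - c : ℕ) : ℝ) = (a:ℝ) - c := Nat.cast_sub hc
      have hP := prod_desc_pos a c hc
      have hstep := m_step (a - c) hm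
      have hE := (Real.exp_pos (c:ℝ)).le
      have h1 : (a:ℝ)^a ≤ (((a-c-1:ℕ):ℝ)^(a-c-1) * ((a-c:ℕ):ℝ) * Real.exp 1) *
          (∏ k ∈ Finset.range c, ((a:ℝ) - k)) * Real.exp c := by
        refine (ih hc).trans ?_
        have := mul_le_mul_of_nonneg_right (mul_le_mul_of_nonneg_right hstep hP.le) hE
        linarith
      refine h1.trans_eq ?_
      rw [Finset.prod_range_succ, hmm, hcast]
      push_cast
      rw [Real.exp_add]
      ring

lemma low_bound (a c : ℕ) (ha : 1 ≤ a) (hc : c ≤ a) :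
    (a:ℝ)^c * Real.exp (-(c:ℝ)^2 / a) ≤ ∏ k ∈ Finset.range c, ((a:ℝ) - k) := by
  have hapos : (0:ℝ) < a := by exact_mod_cast ha
  set m := a - c with hmdef
  have hcast : ((m:ℕ):ℝ) = (a:ℝ) - c := Nat.cast_sub hc
  have hkey := key_ind a ha c hc
  have hmpos : (0:ℝ) < ((m:ℕ):ℝ)^m := by
    rcases Nat.eq_zero_or_pos m with h0 | h0
    · rw [h0]; norm_num
    · have : (0:ℝ) < (m:ℕ) := by exact_mod_cast h0
      positivity
  have hD : (0:ℝ) < ((m:ℕ):ℝ)^m * Real.exp c := mul_pos hmpos (Real.exp_pos _)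
  -- main : a^c * exp(-c²/a) * (m^m * exp c) ≤ a^a
  have hme : ((m:ℕ):ℝ) * Real.exp ((c:ℝ)/a) ≤ a := by
    have h1 := Real.add_one_le_exp (-(c:ℝ)/a)
    have hdiv : (a:ℝ) * (-(c:ℝ)/a) = -c := by field_simp
    have h2 : (a:ℝ) - c ≤ a * Real.exp (-(c:ℝ)/a) := by
      have := mul_le_mul_of_nonneg_left h1 hapos.le
      nlinarith
    have h3 : Real.exp (-(c:ℝ)/a) * Real.exp ((c:ℝ)/a) = 1 := by
      have hz : -(c:ℝ)/a + (c:ℝ)/a = 0 := by ring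
      rw [← Real.exp_add, hz, Real.exp_zero]
    have h4 := mul_le_mul_of_nonneg_right h2 (Real.exp_pos ((c:ℝ)/a)).le
    rw [hcast]
    nlinarith [Real.exp_pos ((c:ℝ)/a)]
  have hpow : (((m:ℕ):ℝ) * Real.exp ((c:ℝ)/a))^m ≤ (a:ℝ)^m :=
    pow_le_pow_left₀ (by positivity) hme m
  have hexpand : (((m:ℕ):ℝ) * Real.exp ((c:ℝ)/a))^m
      = ((m:ℕ):ℝ)^m * (Real.exp (-(c:ℝ)^2/a) * Real.exp c) := by
    rw [mul_pow, ← Real.exp_nat_mul, ← Real.exp_add]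
    congr 2
    rw [hcast]
    field_simp
    ring
  have hmain : (a:ℝ)^c * Real.exp (-(c:ℝ)^2 / a) * (((m:ℕ):ℝ)^m * Real.exp c) ≤ (a:ℝ)^a := by
    have hac : a = c + m := by omega
    calc (a:ℝ)^c * Real.exp (-(c:ℝ)^2 / a) * (((m:ℕ):ℝ)^m * Real.exp c)
        = (a:ℝ)^c * (((m:ℕ):ℝ)^m * (Real.exp (-(c:ℝ)^2/a) * Real.exp c)) := by ring
      _ = (a:ℝ)^c * (((m:ℕ):ℝ) * Real.exp ((c:ℝ)/a))^m := by rw [hexpand]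
      _ ≤ (a:ℝ)^c * (a:ℝ)^m := by nlinarith [pow_pos hapos c]
      _ = (a:ℝ)^a := by rw [← pow_add, ← hac]
  have hfin : (a:ℝ)^c * Real.exp (-(c:ℝ)^2 / a) * (((m:ℕ):ℝ)^m * Real.exp c)
      ≤ (∏ k ∈ Finset.range c, ((a:ℝ) - k)) * (((m:ℕ):ℝ)^m * Real.exp c) := by
    refine hmain.trans ?_
    refine hkey.trans_eq ?_
    ring
  exact le_of_mul_le_mul_right hfin hD


/-- For all integers `a ≥ 1` and all integers `b` with `|b| ≤ a`,
`a^b e^{−b²/a} ≤ (a+b)!/a! ≤ a^b e^{b²/a}`, where `a^b` is the real (integer) power. -/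
theorem statement4 (a b : ℤ) (ha : 1 ≤ a) (hb : |b| ≤ a) :
    (a : ℝ) ^ b * Real.exp (-(b : ℝ) ^ 2 / (a : ℝ)) ≤
        ((a + b).toNat.factorial : ℝ) / (a.toNat.factorial : ℝ) ∧
      ((a + b).toNat.factorial : ℝ) / (a.toNat.factorial : ℝ) ≤
        (a : ℝ) ^ b * Real.exp ((b : ℝ) ^ 2 / (a : ℝ)) := by
  lift a to ℕ using (by omega) with A
  have hA1 : 1 ≤ A := by exact_mod_cast ha
  have hApos : (0:ℝ) < A := by exact_mod_cast hA1
  rcases le_or_gt 0 b with hbn | hbn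
  · -- b ≥ 0
    lift b to ℕ using hbn with n
    have hAn : ((A:ℤ) + (n:ℤ)).toNat = A + n := by omega
    have hAt : ((A:ℤ)).toNat = A := by omega
    rw [hAn, hAt, zpow_natCast, ← prod_asc A n]
    push_cast
    constructor
    · have h1 : Real.exp (-(n:ℝ)^2 / A) ≤ 1 := by
        rw [Real.exp_le_one_iff]
        apply div_nonpos_of_nonpos_of_nonneg
        · nlinarith [sq_nonneg ((n:ℝ))]
        · positivity
      have h2 : (A:ℝ)^n ≤ ∏ k ∈ Finset.range n, ((A:ℝ) + k + 1) := by
        calc (A:ℝ)^n = ∏ _k ∈ Finset.range n, (A:ℝ) := by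
              rw [Finset.prod_const, Finset.card_range]
          _ ≤ ∏ k ∈ Finset.range n, ((A:ℝ) + k + 1) := by
              apply Finset.prod_le_prod (fun k _ => hApos.le)
              intro k _
              linarith [Nat.cast_nonneg (α := ℝ) k]
      calc (A:ℝ)^n * Real.exp (-(n:ℝ)^2 / A) ≤ (A:ℝ)^n * 1 := by
            apply mul_le_mul_of_nonneg_left h1 (by positivity)
        _ = (A:ℝ)^n := mul_one _
        _ ≤ _ := h2
    · exact up_bound A n hA1
  · -- b < 0
    obtain ⟨c, rfl⟩ : ∃ c : ℕ, b = -(c:ℤ) := ⟨(-b).toNat, by omega⟩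
    have hc : c ≤ A := by
      have : |(-(c:ℤ))| = (c:ℤ) := by simp
      omega
    have hAn : ((A:ℤ) + -(c:ℤ)).toNat = A - c := by omega
    have hAt : ((A:ℤ)).toNat = A := by omega
    have hsq : ((-(c:ℤ) : ℤ):ℝ)^2 = (c:ℝ)^2 := by push_cast; ring
    rw [hAn, hAt, zpow_neg, zpow_natCast, hsq]
    have hratio : (((A - c).factorial : ℕ):ℝ) / ((A.factorial : ℕ):ℝ)
        = (∏ k ∈ Finset.range c, ((A:ℝ) - k))⁻¹ := by
      rw [prod_desc A c hc, inv_div]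
    push_cast
    rw [hratio]
    have hP := prod_desc_pos A c hc
    have hup : (∏ k ∈ Finset.range c, ((A:ℝ) - k)) ≤ (A:ℝ)^c * Real.exp ((c:ℝ)^2 / A) := by
      have h2 : (∏ k ∈ Finset.range c, ((A:ℝ) - k)) ≤ (A:ℝ)^c := by
        calc (∏ k ∈ Finset.range c, ((A:ℝ) - k)) ≤ ∏ _k ∈ Finset.range c, (A:ℝ) := by
              apply Finset.prod_le_prod
              · intro k hk
                have : (k:ℝ) < A := by
                  exact_mod_cast lt_of_lt_of_le (Finset.mem_range.mp hk) hc
                linarith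
              · intro k _
                linarith [Nat.cast_nonneg (α := ℝ) k]
          _ = (A:ℝ)^c := by rw [Finset.prod_const, Finset.card_range]
      have h3 : (1:ℝ) ≤ Real.exp ((c:ℝ)^2 / A) := Real.one_le_exp (by positivity)
      nlinarith [pow_pos hApos c]
    have hlo := low_bound A c hA1 hc
    constructor
    · rw [neg_div, Real.exp_neg, ← mul_inv]
      exact inv_anti₀ hP hup
    · have heq : ((A:ℝ)^c)⁻¹ * Real.exp ((c:ℝ)^2 / A)
          = ((A:ℝ)^c * Real.exp (-(c:ℝ)^2 / A))⁻¹ := by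
        rw [neg_div, Real.exp_neg, mul_inv, inv_inv]
      rw [heq]
      exact inv_anti₀ (by positivity) hlo
end

section
/- Let κ > 0, c ∈ (0,1), and let F:(−1,1) → ℝ be any convex function. Then the function m ↦ inf_{θ∈[0,1]} [−κθc − Ξ(m,θ;c)] + F(m) is strictly convex on (−1,1). In particular, for every h ∈ ℝ, m ↦ −hm + inf_{θ∈[0,1]} [−κθc − Ξ(m,θ;c)] + F(m) is strictly convex on (−1,1). -/
open scoped BigOperators
open Filter

noncomputable section

/-- Entropy function of the Bernoulli distribution (finite branch). -/
def entS (p : ℝ) : ℝ := p * Real.log p + (1 - p) * Real.log (1 - p)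

/-- Mole fraction `p_+ = 2θc/(1+m)`. -/
def pPlus (m θ c : ℝ) : ℝ := 2 * θ * c / (1 + m)

/-- Mole fraction `p_- = 2(1-θ)c/(1-m)`. -/
def pMinus (m θ c : ℝ) : ℝ := 2 * (1 - θ) * c / (1 - m)

/-- `Ξ(m,θ;c)` (finite branch). -/
def Xi (m θ c : ℝ) : ℝ :=
  -((1 + m) / 2) * entS (pPlus m θ c) - ((1 - m) / 2) * entS (pMinus m θ c)

/-- Entropy function with the convention `S(p) = +∞` for `p ∉ [0,1]`. -/
def entSE (p : ℝ) : EReal := if 0 ≤ p ∧ p ≤ 1 then ((entS p : ℝ) : EReal) else ⊤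

/-- `-Ξ(m,θ;c)` as an extended real (`+∞` where some mole fraction leaves `[0,1]`). -/
def negXiE (m θ c : ℝ) : EReal :=
  (((1 + m) / 2 : ℝ) : EReal) * entSE (pPlus m θ c)
    + (((1 - m) / 2 : ℝ) : EReal) * entSE (pMinus m θ c)

open Set Topology

namespace Stmt10

/-- The real objective. -/
def gR (κ c m θ : ℝ) : ℝ :=
  -(κ * θ * c) + (1 + m) / 2 * entS (pPlus m θ c) + (1 - m) / 2 * entS (pMinus m θ c)

/-- The feasible set. -/
def Dset (c m : ℝ) : Set ℝ :=
  {θ | θ ∈ Set.Icc (0:ℝ) 1 ∧ pPlus m θ c ≤ 1 ∧ pMinus m θ c ≤ 1}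

def GR (κ c m : ℝ) : ℝ := sInf (gR κ c m '' Dset c m)

lemma continuous_entS : Continuous entS := by
  have h := Real.continuous_mul_log
  have h2 : Continuous fun p : ℝ => (1 - p) * Real.log (1 - p) :=
    h.comp (continuous_const.sub continuous_id)
  exact h.add h2

lemma mul_log_ge {p : ℝ} (h0 : 0 ≤ p) (h1 : p ≤ 1) : -1 ≤ p * Real.log p := by
  rcases eq_or_lt_of_le h0 with h | h
  · simp [← h]
  · have hlog : Real.log (1 / p) ≤ 1 / p - 1 := Real.log_le_sub_one_of_pos (by positivity)
    rw [Real.log_div one_ne_zero h.ne', Real.log_one] at hlog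
    have : p * (0 - Real.log p) ≤ p * (1 / p - 1) :=
      mul_le_mul_of_nonneg_left hlog h0
    have hinv : p * (1 / p) = 1 := by field_simp
    nlinarith [this, hinv]

lemma entS_ge {p : ℝ} (h0 : 0 ≤ p) (h1 : p ≤ 1) : -2 ≤ entS p := by
  have h2 := mul_log_ge (by linarith : (0:ℝ) ≤ 1 - p) (by linarith : (1:ℝ) - p ≤ 1)
  have h3 := mul_log_ge h0 h1
  unfold entS
  linarith

lemma strictConvexOn_entS : StrictConvexOn ℝ (Set.Icc (0:ℝ) 1) entS := by
  have h1 : StrictConvexOn ℝ (Set.Icc (0:ℝ) 1) (fun x => x * Real.log x) :=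
    Real.strictConvexOn_mul_log.subset (fun x hx => hx.1) (convex_Icc _ _)
  have h2 : StrictConvexOn ℝ (Set.Icc (0:ℝ) 1)
      (fun p => (1 - p) * Real.log (1 - p)) := by
    refine ⟨convex_Icc _ _, fun x hx y hy hxy a b ha hb hab => ?_⟩
    have hx' : (1:ℝ) - x ∈ Set.Icc (0:ℝ) 1 := ⟨by linarith [hx.2], by linarith [hx.1]⟩
    have hy' : (1:ℝ) - y ∈ Set.Icc (0:ℝ) 1 := ⟨by linarith [hy.2], by linarith [hy.1]⟩
    have hxy' : (1:ℝ) - x ≠ 1 - y := fun h => hxy (by linarith)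
    have := h1.2 hx' hy' (by intro h; apply hxy; linarith [h]) ha hb hab
    simp only [smul_eq_mul] at this ⊢
    have harg : 1 - (a * x + b * y) = a * (1 - x) + b * (1 - y) := by linear_combination -hab
    rw [harg]
    exact this
  have h3 := h1.add h2
  have heq : entS = ((fun x => x * Real.log x) + fun p => (1 - p) * Real.log (1 - p)) := by
    funext p; simp [entS]
  rw [heq]; exact h3

/-- Perspective inequality with equality case. -/
lemma persp {a₁ a₂ x₁ x₂ lam mu : ℝ} (ha₁ : 0 < a₁) (ha₂ : 0 < a₂)
    (hp₁ : x₁ / a₁ ∈ Set.Icc (0:ℝ) 1) (hp₂ : x₂ / a₂ ∈ Set.Icc (0:ℝ) 1)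
    (hlam : 0 < lam) (hmu : 0 < mu) (hlm : lam + mu = 1) :
    (lam * a₁ + mu * a₂) * entS ((lam * x₁ + mu * x₂) / (lam * a₁ + mu * a₂))
      ≤ lam * (a₁ * entS (x₁ / a₁)) + mu * (a₂ * entS (x₂ / a₂)) ∧
    (x₁ / a₁ ≠ x₂ / a₂ →
      (lam * a₁ + mu * a₂) * entS ((lam * x₁ + mu * x₂) / (lam * a₁ + mu * a₂))
        < lam * (a₁ * entS (x₁ / a₁)) + mu * (a₂ * entS (x₂ / a₂))) := by
  have hA : 0 < lam * a₁ + mu * a₂ := by positivity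
  set A := lam * a₁ + mu * a₂ with hAdef
  have ht : 0 < lam * a₁ / A := by positivity
  have hs : 0 < mu * a₂ / A := by positivity
  have hts : lam * a₁ / A + mu * a₂ / A = 1 := by field_simp; linarith
  have hcomb : (lam * x₁ + mu * x₂) / A
      = (lam * a₁ / A) * (x₁ / a₁) + (mu * a₂ / A) * (x₂ / a₂) := by
    field_simp
  by_cases hpp : x₁ / a₁ = x₂ / a₂
  · constructor
    · have hx₁ : x₁ = (x₁ / a₁) * a₁ := by field_simp
      have hx₂ : x₂ = (x₁ / a₁) * a₂ := by
        rw [hpp]; field_simp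
      have harg : (lam * x₁ + mu * x₂) / A = x₁ / a₁ := by
        rw [hAdef]
        nth_rewrite 1 [hx₁]; nth_rewrite 1 [hx₂]
        field_simp
      rw [harg, ← hpp]
      apply le_of_eq
      ring
    · intro h; exact absurd hpp h
  · have hstrict := strictConvexOn_entS.2 hp₁ hp₂ hpp ht hs hts
    simp only [smul_eq_mul] at hstrict
    rw [← hcomb] at hstrict
    have := mul_lt_mul_of_pos_left hstrict hA
    have hfin : A * ((lam * a₁ / A) * entS (x₁ / a₁) + (mu * a₂ / A) * entS (x₂ / a₂))
        = lam * (a₁ * entS (x₁ / a₁)) + mu * (a₂ * entS (x₂ / a₂)) := by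
      field_simp
    rw [hfin] at this
    exact ⟨this.le, fun _ => this⟩

variable {κ c m θ : ℝ}

lemma pPlus_mem_Icc (hc : c ∈ Set.Ioo (0:ℝ) 1) (hm : m ∈ Set.Ioo (-1:ℝ) 1)
    (hθ : θ ∈ Dset c m) : pPlus m θ c ∈ Set.Icc (0:ℝ) 1 := by
  refine ⟨?_, hθ.2.1⟩
  unfold pPlus
  have h1 : (0:ℝ) < 1 + m := by linarith [hm.1]
  exact div_nonneg (by nlinarith [hθ.1.1, hc.1]) h1.le

lemma pMinus_mem_Icc (hc : c ∈ Set.Ioo (0:ℝ) 1) (hm : m ∈ Set.Ioo (-1:ℝ) 1)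
    (hθ : θ ∈ Dset c m) : pMinus m θ c ∈ Set.Icc (0:ℝ) 1 := by
  refine ⟨?_, hθ.2.2⟩
  unfold pMinus
  have h1 : (0:ℝ) < 1 - m := by linarith [hm.2]
  have h2 : (0:ℝ) ≤ 1 - θ := by linarith [hθ.1.2]
  exact div_nonneg (by nlinarith [hc.1]) h1.le

lemma pPlus_mid (hc : c ∈ Set.Ioo (0:ℝ) 1) (hm : m ∈ Set.Ioo (-1:ℝ) 1) :
    pPlus m ((1 + m)/2) c = c := by
  have h1 : (1:ℝ) + m ≠ 0 := by have := hm.1; intro h; linarith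
  unfold pPlus; field_simp

lemma pMinus_mid (hc : c ∈ Set.Ioo (0:ℝ) 1) (hm : m ∈ Set.Ioo (-1:ℝ) 1) :
    pMinus m ((1 + m)/2) c = c := by
  have h1 : (1:ℝ) - m ≠ 0 := by have := hm.2; intro h; linarith
  unfold pMinus; field_simp; ring

lemma mid_mem_Dset (hc : c ∈ Set.Ioo (0:ℝ) 1) (hm : m ∈ Set.Ioo (-1:ℝ) 1) :
    (1 + m)/2 ∈ Dset c m := by
  refine ⟨⟨by linarith [hm.1], by linarith [hm.2]⟩, ?_, ?_⟩
  · rw [pPlus_mid hc hm]; exact hc.2.le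
  · rw [pMinus_mid hc hm]; exact hc.2.le

lemma Dset_nonempty (hc : c ∈ Set.Ioo (0:ℝ) 1) (hm : m ∈ Set.Ioo (-1:ℝ) 1) :
    (Dset c m).Nonempty := ⟨_, mid_mem_Dset hc hm⟩

lemma gR_lower (hκ : 0 < κ) (hc : c ∈ Set.Ioo (0:ℝ) 1) (hm : m ∈ Set.Ioo (-1:ℝ) 1)
    (hθ : θ ∈ Dset c m) : -(κ * c) - 2 ≤ gR κ c m θ := by
  have h1 : (0:ℝ) < 1 + m := by linarith [hm.1]
  have h2 : (0:ℝ) < 1 - m := by linarith [hm.2]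
  have hp := pPlus_mem_Icc hc hm hθ
  have hq := pMinus_mem_Icc hc hm hθ
  have e1 := entS_ge hp.1 hp.2
  have e2 := entS_ge hq.1 hq.2
  have b1 : (1 + m)/2 * (-2) ≤ (1 + m)/2 * entS (pPlus m θ c) :=
    mul_le_mul_of_nonneg_left e1 (by linarith)
  have b2 : (1 - m)/2 * (-2) ≤ (1 - m)/2 * entS (pMinus m θ c) :=
    mul_le_mul_of_nonneg_left e2 (by linarith)
  have b3 : -(κ * c) ≤ -(κ * θ * c) := by
    nlinarith [mul_nonneg (mul_nonneg hκ.le hc.1.le) (by linarith [hθ.1.2] : (0:ℝ) ≤ 1 - θ)]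
  unfold gR
  nlinarith

lemma bddBelow_gR (hκ : 0 < κ) (hc : c ∈ Set.Ioo (0:ℝ) 1) (hm : m ∈ Set.Ioo (-1:ℝ) 1) :
    BddBelow (gR κ c m '' Dset c m) := by
  refine ⟨-(κ * c) - 2, ?_⟩
  rintro y ⟨θ, hθ, rfl⟩
  exact gR_lower hκ hc hm hθ

/-- the summand in the EReal infimum, feasible case -/
lemma value_eq_of_mem (hκ : 0 < κ) (hc : c ∈ Set.Ioo (0:ℝ) 1) (hm : m ∈ Set.Ioo (-1:ℝ) 1)
    (hθ : θ ∈ Dset c m) :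
    (((-(κ * θ * c)) : ℝ) : EReal) + negXiE m θ c = ((gR κ c m θ : ℝ) : EReal) := by
  have h1 : (0:ℝ) < 1 + m := by linarith [hm.1]
  have h2 : (0:ℝ) < 1 - m := by linarith [hm.2]
  have hp := pPlus_mem_Icc hc hm hθ
  have hq := pMinus_mem_Icc hc hm hθ
  unfold negXiE entSE
  rw [if_pos ⟨hp.1, hp.2⟩, if_pos ⟨hq.1, hq.2⟩]
  rw [← EReal.coe_mul, ← EReal.coe_mul, ← EReal.coe_add, ← EReal.coe_add]
  congr 1
  unfold gR; ring

lemma value_eq_of_not_mem (hκ : 0 < κ) (hc : c ∈ Set.Ioo (0:ℝ) 1) (hm : m ∈ Set.Ioo (-1:ℝ) 1)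
    (hθ : θ ∈ Set.Icc (0:ℝ) 1) (hfeas : θ ∉ Dset c m) :
    (((-(κ * θ * c)) : ℝ) : EReal) + negXiE m θ c = ⊤ := by
  have h1 : (0:ℝ) < 1 + m := by linarith [hm.1]
  have h2 : (0:ℝ) < 1 - m := by linarith [hm.2]
  have hbne : ∀ (b p : ℝ), 0 < b → ((b : ℝ) : EReal) * entSE p ≠ ⊥ := by
    intro b p hb
    unfold entSE
    split_ifs
    · rw [← EReal.coe_mul]; exact EReal.coe_ne_bot _
    · rw [EReal.coe_mul_top_of_pos hb]; exact top_ne_bot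
  have hcase : ¬ pPlus m θ c ≤ 1 ∨ ¬ pMinus m θ c ≤ 1 := by
    by_contra h
    push_neg at h
    exact hfeas ⟨hθ, h.1, h.2⟩
  unfold negXiE
  rcases hcase with h | h
  · have ht : entSE (pPlus m θ c) = ⊤ := by
      unfold entSE; rw [if_neg]; tauto
    rw [ht, EReal.coe_mul_top_of_pos (by linarith : (0:ℝ) < (1 + m)/2)]
    rw [EReal.top_add_of_ne_bot (hbne _ _ (by linarith : (0:ℝ) < (1 - m)/2))]
    exact EReal.coe_add_top _
  · have ht : entSE (pMinus m θ c) = ⊤ := by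
      unfold entSE; rw [if_neg]; tauto
    rw [ht, EReal.coe_mul_top_of_pos (by linarith : (0:ℝ) < (1 - m)/2)]
    rw [EReal.add_top_of_ne_bot (hbne _ _ (by linarith : (0:ℝ) < (1 + m)/2))]
    exact EReal.coe_add_top _

lemma iInf_eq (hκ : 0 < κ) (hc : c ∈ Set.Ioo (0:ℝ) 1) (hm : m ∈ Set.Ioo (-1:ℝ) 1) :
    (⨅ θ ∈ Set.Icc (0 : ℝ) 1,
        (((-(κ * θ * c)) : ℝ) : EReal) + negXiE m θ c) = ((GR κ c m : ℝ) : EReal) := by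
  have hne : (gR κ c m '' Dset c m).Nonempty := (Dset_nonempty hc hm).image _
  have hbdd := bddBelow_gR hκ hc hm
  apply le_antisymm
  · by_contra hcon
    rw [not_le] at hcon
    obtain ⟨r, hr1, hr2⟩ := EReal.exists_between_coe_real hcon
    rw [EReal.coe_lt_coe_iff] at hr1
    obtain ⟨y, ⟨θ, hθD, rfl⟩, hy⟩ := exists_lt_of_csInf_lt hne hr1
    have hle : (⨅ θ ∈ Set.Icc (0 : ℝ) 1,
        (((-(κ * θ * c)) : ℝ) : EReal) + negXiE m θ c)
        ≤ (((-(κ * θ * c)) : ℝ) : EReal) + negXiE m θ c := iInf₂_le θ hθD.1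
    rw [value_eq_of_mem hκ hc hm hθD] at hle
    have : ((gR κ c m θ : ℝ) : EReal) < (r : EReal) := EReal.coe_lt_coe_iff.mpr hy
    exact absurd (lt_of_le_of_lt (hle.trans this.le) hr2) (lt_irrefl _)
  · refine le_iInf₂ fun θ hθ => ?_
    by_cases hfeas : θ ∈ Dset c m
    · rw [value_eq_of_mem hκ hc hm hfeas]
      exact EReal.coe_le_coe_iff.mpr (csInf_le hbdd ⟨θ, hfeas, rfl⟩)
    · rw [value_eq_of_not_mem hκ hc hm hθ hfeas]
      exact le_top

lemma toReal_iInf_eq (hκ : 0 < κ) (hc : c ∈ Set.Ioo (0:ℝ) 1) (hm : m ∈ Set.Ioo (-1:ℝ) 1) :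
    (⨅ θ ∈ Set.Icc (0 : ℝ) 1,
        (((-(κ * θ * c)) : ℝ) : EReal) + negXiE m θ c).toReal = GR κ c m := by
  rw [iInf_eq hκ hc hm, EReal.toReal_coe]

lemma isCompact_Dset (hm : m ∈ Set.Ioo (-1:ℝ) 1) : IsCompact (Dset c m) := by
  have heq : Dset c m = Set.Icc (0:ℝ) 1
      ∩ ({θ | pPlus m θ c ≤ 1} ∩ {θ | pMinus m θ c ≤ 1}) := by
    ext θ; simp [Dset, Set.mem_setOf_eq, and_assoc]
  rw [heq]
  have c1 : Continuous fun θ => pPlus m θ c := by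
    unfold pPlus
    exact ((continuous_const.mul continuous_id).mul continuous_const).div_const _
  have c2 : Continuous fun θ => pMinus m θ c := by
    unfold pMinus
    exact ((continuous_const.mul (continuous_const.sub continuous_id)).mul
      continuous_const).div_const _
  exact isCompact_Icc.inter_right
    (((isClosed_le c1 continuous_const)).inter (isClosed_le c2 continuous_const))

lemma continuous_gR : Continuous (gR κ c m) := by
  unfold gR
  have c1 : Continuous fun θ => pPlus m θ c := by
    unfold pPlus
    exact ((continuous_const.mul continuous_id).mul continuous_const).div_const _
  have c2 : Continuous fun θ => pMinus m θ c := by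
    unfold pMinus
    exact ((continuous_const.mul (continuous_const.sub continuous_id)).mul
      continuous_const).div_const _
  exact (((continuous_const.mul continuous_id).mul continuous_const).neg.add
      (continuous_const.mul (continuous_entS.comp c1))).add
    (continuous_const.mul (continuous_entS.comp c2))

lemma exists_min (hκ : 0 < κ) (hc : c ∈ Set.Ioo (0:ℝ) 1) (hm : m ∈ Set.Ioo (-1:ℝ) 1) :
    ∃ θ₀ ∈ Dset c m, (GR κ c m = gR κ c m θ₀ ∧ ∀ θ ∈ Dset c m, gR κ c m θ₀ ≤ gR κ c m θ) := by
  obtain ⟨θ₀, hθ₀, hmin⟩ := (isCompact_Dset hm).exists_isMinOn (Dset_nonempty hc hm)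
    continuous_gR.continuousOn
  refine ⟨θ₀, hθ₀, ?_, fun θ hθ => hmin hθ⟩
  apply le_antisymm
  · exact csInf_le (bddBelow_gR hκ hc hm) ⟨θ₀, hθ₀, rfl⟩
  · refine le_csInf ((Dset_nonempty hc hm).image _) ?_
    rintro y ⟨θ, hθ, rfl⟩
    exact hmin hθ

lemma hasDerivAt_entS {p : ℝ} (h0 : 0 < p) (h1 : p < 1) :
    HasDerivAt entS (Real.log p - Real.log (1 - p)) p := by
  have h1' : (1:ℝ) - p ≠ 0 := by linarith
  have A := Real.hasDerivAt_mul_log h0.ne'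
  have inner : HasDerivAt (fun q : ℝ => 1 - q) (-1 : ℝ) p := by
    simpa using (hasDerivAt_id p).const_sub (1:ℝ)
  have B : HasDerivAt (fun q : ℝ => (1 - q) * Real.log (1 - q))
      ((Real.log (1 - p) + 1) * (-1)) p :=
    (Real.hasDerivAt_mul_log h1').comp p inner
  have := A.add B
  unfold entS
  exact this.congr_deriv (by ring)

lemma hasDerivAt_gR (hκ : 0 < κ) (hc : c ∈ Set.Ioo (0:ℝ) 1) (hm : m ∈ Set.Ioo (-1:ℝ) 1) :
    HasDerivAt (gR κ c m) (-(κ * c)) ((1 + m)/2) := by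
  have h1 : (0:ℝ) < 1 + m := by linarith [hm.1]
  have h2 : (0:ℝ) < 1 - m := by linarith [hm.2]
  set θ₀ : ℝ := (1 + m)/2 with hθ₀
  have hPfun : (fun θ => pPlus m θ c) = fun θ => θ * (2 * c / (1 + m)) := by
    funext θ; unfold pPlus; ring
  have hMfun : (fun θ => pMinus m θ c) = fun θ => (1 - θ) * (2 * c / (1 - m)) := by
    funext θ; unfold pMinus; ring
  have hP : HasDerivAt (fun θ => pPlus m θ c) (2 * c / (1 + m)) θ₀ := by
    rw [hPfun]
    simpa using (hasDerivAt_id θ₀).mul_const (2 * c / (1 + m))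
  have hM : HasDerivAt (fun θ => pMinus m θ c) (-(2 * c / (1 - m))) θ₀ := by
    rw [hMfun]
    have : HasDerivAt (fun θ : ℝ => 1 - θ) (-1 : ℝ) θ₀ := by
      simpa using (hasDerivAt_id θ₀).const_sub (1:ℝ)
    simpa using this.mul_const (2 * c / (1 - m))
  have hE : HasDerivAt entS (Real.log c - Real.log (1 - c)) (pPlus m θ₀ c) := by
    rw [pPlus_mid hc hm]
    exact hasDerivAt_entS hc.1 hc.2
  have hE' : HasDerivAt entS (Real.log c - Real.log (1 - c)) (pMinus m θ₀ c) := by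
    rw [pMinus_mid hc hm]
    exact hasDerivAt_entS hc.1 hc.2
  have hterm1 : HasDerivAt (fun θ => (1 + m)/2 * entS (pPlus m θ c))
      ((1 + m)/2 * ((Real.log c - Real.log (1 - c)) * (2 * c / (1 + m)))) θ₀ :=
    (hE.comp θ₀ hP).const_mul _
  have hterm2 : HasDerivAt (fun θ => (1 - m)/2 * entS (pMinus m θ c))
      ((1 - m)/2 * ((Real.log c - Real.log (1 - c)) * (-(2 * c / (1 - m))))) θ₀ :=
    (hE'.comp θ₀ hM).const_mul _
  have hlin : HasDerivAt (fun θ => -(κ * θ * c)) (-(κ * c)) θ₀ := by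
    have : (fun θ : ℝ => -(κ * θ * c)) = fun θ => θ * (-(κ * c)) := by
      funext θ; ring
    rw [this]
    simpa using (hasDerivAt_id θ₀).mul_const (-(κ * c))
  have htot := (hlin.add hterm1).add hterm2
  have : gR κ c m = fun θ => -(κ * θ * c) + (1 + m)/2 * entS (pPlus m θ c)
      + (1 - m)/2 * entS (pMinus m θ c) := by
    funext θ; unfold gR; ring
  rw [this]
  exact htot.congr_deriv (by field_simp; ring)

lemma mid_not_min (hκ : 0 < κ) (hc : c ∈ Set.Ioo (0:ℝ) 1) (hm : m ∈ Set.Ioo (-1:ℝ) 1) :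
    ∃ θ' ∈ Dset c m, gR κ c m θ' < gR κ c m ((1 + m)/2) := by
  have h1 : (0:ℝ) < 1 + m := by linarith [hm.1]
  have h2 : (0:ℝ) < 1 - m := by linarith [hm.2]
  set θ₀ : ℝ := (1 + m)/2 with hθ₀def
  have hD := hasDerivAt_gR hκ hc hm
  rw [hasDerivAt_iff_tendsto_slope] at hD
  have hmono : (𝓝[>] θ₀) ≤ (𝓝[≠] θ₀) :=
    nhdsWithin_mono θ₀ (fun x hx => ne_of_gt hx)
  have hD' := hD.mono_left hmono
  have hneg : -(κ * c) < 0 := by nlinarith [hc.1]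
  have ev1 : ∀ᶠ θ in 𝓝[>] θ₀, slope (gR κ c m) θ₀ θ < 0 :=
    hD'.eventually_lt_const hneg
  -- eventually in Dset
  have hB : θ₀ < min 1 ((1 + m)/(2 * c)) := by
    refine lt_min (by linarith [hm.2]) ?_
    rw [div_lt_div_iff₀ (by norm_num) (by nlinarith [hc.1])]
    nlinarith [hc.2, hc.1]
  have ev2 : ∀ᶠ θ in 𝓝[>] θ₀, θ ∈ Dset c m := by
    filter_upwards [Ioo_mem_nhdsGT_of_mem (⟨le_refl θ₀, hB⟩ : θ₀ ∈ Set.Ico θ₀ _)]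
      with θ hθ
    obtain ⟨hθl, hθr⟩ := hθ
    have hθ1 : θ < 1 := lt_of_lt_of_le hθr (min_le_left _ _)
    have hθc : θ < (1 + m)/(2 * c) := lt_of_lt_of_le hθr (min_le_right _ _)
    have hθ0 : 0 < θ := lt_trans (by linarith) hθl
    refine ⟨⟨hθ0.le, hθ1.le⟩, ?_, ?_⟩
    · unfold pPlus
      rw [div_le_one h1]
      rw [lt_div_iff₀ (by nlinarith [hc.1])] at hθc
      linarith
    · unfold pMinus
      rw [div_le_one h2]
      nlinarith [hc.1, hc.2]
  obtain ⟨θ', hθ'⟩ := ((ev1.and ev2).and eventually_mem_nhdsWithin).exists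
  obtain ⟨⟨hslope, hmem⟩, hgt⟩ := hθ'
  refine ⟨θ', hmem, ?_⟩
  rw [slope_def_field] at hslope
  have hd : 0 < θ' - θ₀ := by
    have : θ₀ < θ' := hgt
    linarith
  rcases div_neg_iff.mp hslope with ⟨hnum, hden⟩ | ⟨hnum, hden⟩
  · linarith
  · linarith

lemma pPlus_eq_div (hm : m ∈ Set.Ioo (-1:ℝ) 1) :
    pPlus m θ c = (θ * c) / ((1 + m)/2) := by
  have h1 : (1:ℝ) + m ≠ 0 := by have := hm.1; intro h; linarith
  unfold pPlus; field_simp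

lemma pMinus_eq_div (hm : m ∈ Set.Ioo (-1:ℝ) 1) :
    pMinus m θ c = ((1 - θ) * c) / ((1 - m)/2) := by
  have h1 : (1:ℝ) - m ≠ 0 := by have := hm.2; intro h; linarith
  unfold pMinus; field_simp

lemma comb_mem_Dset (hc : c ∈ Set.Ioo (0:ℝ) 1) {m₁ m₂ θ₁ θ₂ lam mu : ℝ}
    (hm₁ : m₁ ∈ Set.Ioo (-1:ℝ) 1) (hm₂ : m₂ ∈ Set.Ioo (-1:ℝ) 1)
    (hθ₁ : θ₁ ∈ Dset c m₁) (hθ₂ : θ₂ ∈ Dset c m₂)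
    (hlam : 0 < lam) (hmu : 0 < mu) (hlm : lam + mu = 1) :
    lam * θ₁ + mu * θ₂ ∈ Dset c (lam * m₁ + mu * m₂) := by
  have h1 : (0:ℝ) < 1 + (lam * m₁ + mu * m₂) := by nlinarith [hm₁.1, hm₂.1]
  have h2 : (0:ℝ) < 1 - (lam * m₁ + mu * m₂) := by nlinarith [hm₁.2, hm₂.2]
  have e1 : 2 * θ₁ * c ≤ 1 + m₁ := by
    have := hθ₁.2.1; unfold pPlus at this
    rw [div_le_one (by linarith [hm₁.1])] at this; linarith
  have e2 : 2 * θ₂ * c ≤ 1 + m₂ := by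
    have := hθ₂.2.1; unfold pPlus at this
    rw [div_le_one (by linarith [hm₂.1])] at this; linarith
  have e3 : 2 * (1 - θ₁) * c ≤ 1 - m₁ := by
    have := hθ₁.2.2; unfold pMinus at this
    rw [div_le_one (by linarith [hm₁.2])] at this; linarith
  have e4 : 2 * (1 - θ₂) * c ≤ 1 - m₂ := by
    have := hθ₂.2.2; unfold pMinus at this
    rw [div_le_one (by linarith [hm₂.2])] at this; linarith
  refine ⟨⟨by nlinarith [hθ₁.1.1, hθ₂.1.1], by nlinarith [hθ₁.1.2, hθ₂.1.2]⟩, ?_, ?_⟩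
  · unfold pPlus; rw [div_le_one h1]; nlinarith
  · unfold pMinus; rw [div_le_one h2]; nlinarith

lemma key_ineq (hκ : 0 < κ) (hc : c ∈ Set.Ioo (0:ℝ) 1) {m₁ m₂ θ₁ θ₂ lam mu : ℝ}
    (hm₁ : m₁ ∈ Set.Ioo (-1:ℝ) 1) (hm₂ : m₂ ∈ Set.Ioo (-1:ℝ) 1)
    (hθ₁ : θ₁ ∈ Dset c m₁) (hθ₂ : θ₂ ∈ Dset c m₂)
    (hlam : 0 < lam) (hmu : 0 < mu) (hlm : lam + mu = 1)
    (hdiff : pPlus m₁ θ₁ c ≠ pPlus m₂ θ₂ c ∨ pMinus m₁ θ₁ c ≠ pMinus m₂ θ₂ c) :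
    gR κ c (lam * m₁ + mu * m₂) (lam * θ₁ + mu * θ₂)
      < lam * gR κ c m₁ θ₁ + mu * gR κ c m₂ θ₂ := by
  have a₁p : (0:ℝ) < (1 + m₁)/2 := by linarith [hm₁.1]
  have a₂p : (0:ℝ) < (1 + m₂)/2 := by linarith [hm₂.1]
  have b₁p : (0:ℝ) < (1 - m₁)/2 := by linarith [hm₁.2]
  have b₂p : (0:ℝ) < (1 - m₂)/2 := by linarith [hm₂.2]
  have hmbar : lam * m₁ + mu * m₂ ∈ Set.Ioo (-1:ℝ) 1 :=
    ⟨by nlinarith [hm₁.1, hm₂.1], by nlinarith [hm₁.2, hm₂.2]⟩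
  -- plus branch
  have hP := persp (a₁ := (1 + m₁)/2) (a₂ := (1 + m₂)/2) (x₁ := θ₁ * c) (x₂ := θ₂ * c)
    a₁p a₂p (by rw [← pPlus_eq_div hm₁]; exact pPlus_mem_Icc hc hm₁ hθ₁)
    (by rw [← pPlus_eq_div hm₂]; exact pPlus_mem_Icc hc hm₂ hθ₂) hlam hmu hlm
  have hM := persp (a₁ := (1 - m₁)/2) (a₂ := (1 - m₂)/2)
    (x₁ := (1 - θ₁) * c) (x₂ := (1 - θ₂) * c)
    b₁p b₂p (by rw [← pMinus_eq_div hm₁]; exact pMinus_mem_Icc hc hm₁ hθ₁)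
    (by rw [← pMinus_eq_div hm₂]; exact pMinus_mem_Icc hc hm₂ hθ₂) hlam hmu hlm
  -- rewrite the combined points
  have cA : lam * ((1 + m₁)/2) + mu * ((1 + m₂)/2) = (1 + (lam * m₁ + mu * m₂))/2 := by
    field_simp; linarith
  have cX : lam * (θ₁ * c) + mu * (θ₂ * c) = (lam * θ₁ + mu * θ₂) * c := by ring
  have cB : lam * ((1 - m₁)/2) + mu * ((1 - m₂)/2) = (1 - (lam * m₁ + mu * m₂))/2 := by
    field_simp; linarith
  have cY : lam * ((1 - θ₁) * c) + mu * ((1 - θ₂) * c)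
      = (1 - (lam * θ₁ + mu * θ₂)) * c := by
    linear_combination c * hlm
  rw [cA, cX, ← pPlus_eq_div hmbar, ← pPlus_eq_div hm₁, ← pPlus_eq_div hm₂] at hP
  rw [cB, cY, ← pMinus_eq_div hmbar, ← pMinus_eq_div hm₁, ← pMinus_eq_div hm₂] at hM
  have hlin : -(κ * (lam * θ₁ + mu * θ₂) * c)
      = lam * (-(κ * θ₁ * c)) + mu * (-(κ * θ₂ * c)) := by ring
  unfold gR
  rcases hdiff with h | h
  · have hPs := hP.2 h
    have hMs := hM.1
    nlinarith [hPs, hMs]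
  · have hPs := hP.1
    have hMs := hM.2 h
    nlinarith [hPs, hMs]

lemma strictConvexOn_GR (hκ : 0 < κ) (hc : c ∈ Set.Ioo (0:ℝ) 1) :
    StrictConvexOn ℝ (Set.Ioo (-1:ℝ) 1) (fun m => GR κ c m) := by
  refine ⟨convex_Ioo _ _, fun m₁ hm₁ m₂ hm₂ hne lam mu hlam hmu hlm => ?_⟩
  simp only [smul_eq_mul]
  obtain ⟨θ₁, hθ₁, hG₁, hmin₁⟩ := exists_min hκ hc hm₁
  obtain ⟨θ₂, hθ₂, hG₂, hmin₂⟩ := exists_min hκ hc hm₂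
  have hmbar : lam * m₁ + mu * m₂ ∈ Set.Ioo (-1:ℝ) 1 :=
    ⟨by nlinarith [hm₁.1, hm₂.1], by nlinarith [hm₁.2, hm₂.2]⟩
  have hθbar := comb_mem_Dset hc hm₁ hm₂ hθ₁ hθ₂ hlam hmu hlm
  have hub : GR κ c (lam * m₁ + mu * m₂) ≤ gR κ c (lam * m₁ + mu * m₂) (lam * θ₁ + mu * θ₂) :=
    csInf_le (bddBelow_gR hκ hc hmbar) ⟨_, hθbar, rfl⟩
  by_cases hdeg : pPlus m₁ θ₁ c = pPlus m₂ θ₂ c ∧ pMinus m₁ θ₁ c = pMinus m₂ θ₂ c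
  · exfalso
    -- the degenerate case forces θ₁ = (1+m₁)/2, contradicting mid_not_min
    have h1p : (1:ℝ) + m₁ ≠ 0 := by have := hm₁.1; intro h; linarith
    have h2p : (1:ℝ) + m₂ ≠ 0 := by have := hm₂.1; intro h; linarith
    have h1m : (1:ℝ) - m₁ ≠ 0 := by have := hm₁.2; intro h; linarith
    have h2m : (1:ℝ) - m₂ ≠ 0 := by have := hm₂.2; intro h; linarith
    have e1 : 2 * θ₁ * c = pPlus m₁ θ₁ c * (1 + m₁) := by
      unfold pPlus; field_simp
    have e2 : 2 * θ₂ * c = pPlus m₁ θ₁ c * (1 + m₂) := by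
      rw [hdeg.1]; unfold pPlus; field_simp
    have e3 : 2 * (1 - θ₁) * c = pMinus m₁ θ₁ c * (1 - m₁) := by
      unfold pMinus; field_simp
    have e4 : 2 * (1 - θ₂) * c = pMinus m₁ θ₁ c * (1 - m₂) := by
      rw [hdeg.2]; unfold pMinus; field_simp
    set p := pPlus m₁ θ₁ c with hp
    set q := pMinus m₁ θ₁ c with hq
    have hpq0 : (p - q) * (m₁ - m₂) = 0 := by linear_combination e2 - e1 + e4 - e3
    have hpq : p = q := by
      rcases mul_eq_zero.mp hpq0 with h | h
      · linarith
      · exact absurd (by linarith : m₁ = m₂) hne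
    have hpc : p = c := by
      have : 2 * c = 2 * p := by linear_combination e1 + e3 + (m₁ - 1) * hpq
      linarith
    have hθmid : θ₁ = (1 + m₁)/2 := by
      have hc0 : c ≠ 0 := hc.1.ne'
      have : c * (2 * θ₁ - (1 + m₁)) = 0 := by linear_combination e1 + (1 + m₁) * hpc
      rcases mul_eq_zero.mp this with h | h
      · exact absurd h hc0
      · linarith
    obtain ⟨θ', hθ'D, hθ'lt⟩ := mid_not_min hκ hc hm₁
    rw [← hθmid] at hθ'lt
    exact absurd (hmin₁ θ' hθ'D) (not_le.mpr hθ'lt)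
  · have hdiff := not_and_or.mp hdeg
    have hstrict := key_ineq hκ hc hm₁ hm₂ hθ₁ hθ₂ hlam hmu hlm hdiff
    calc GR κ c (lam * m₁ + mu * m₂)
        ≤ gR κ c (lam * m₁ + mu * m₂) (lam * θ₁ + mu * θ₂) := hub
      _ < lam * gR κ c m₁ θ₁ + mu * gR κ c m₂ θ₂ := hstrict
      _ = lam * GR κ c m₁ + mu * GR κ c m₂ := by rw [hG₁, hG₂]

lemma strictConvexOn_congr {f g : ℝ → ℝ} {s : Set ℝ} (hf : StrictConvexOn ℝ s f)
    (h : ∀ x ∈ s, f x = g x) : StrictConvexOn ℝ s g := by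
  refine ⟨hf.1, fun x hx y hy hxy a b ha hb hab => ?_⟩
  have hmem : a • x + b • y ∈ s := hf.1 hx hy ha.le hb.le hab
  rw [← h x hx, ← h y hy, ← h _ hmem]
  exact hf.2 hx hy hxy ha hb hab

end Stmt10

open Stmt10 in
/-- For `κ > 0`, `c ∈ (0,1)` and any convex `F`, the function
`m ↦ inf_{θ∈[0,1]} [−κθc − Ξ(m,θ;c)] + F(m)` is strictly convex on `(−1,1)`;
the same holds after adding a linear term `−hm`. -/
theorem statement10 (κ c : ℝ) (hκ : 0 < κ) (hc : c ∈ Set.Ioo (0 : ℝ) 1)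
    (F : ℝ → ℝ) (hF : ConvexOn ℝ (Set.Ioo (-1 : ℝ) 1) F) :
    StrictConvexOn ℝ (Set.Ioo (-1 : ℝ) 1)
      (fun m =>
        (⨅ θ ∈ Set.Icc (0 : ℝ) 1,
            (((-(κ * θ * c)) : ℝ) : EReal) + negXiE m θ c).toReal + F m) ∧
    ∀ h : ℝ, StrictConvexOn ℝ (Set.Ioo (-1 : ℝ) 1)
      (fun m => -(h * m) +
        ((⨅ θ ∈ Set.Icc (0 : ℝ) 1,
            (((-(κ * θ * c)) : ℝ) : EReal) + negXiE m θ c).toReal + F m)) := by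
  have hGR := strictConvexOn_GR hκ hc
  have hsum : StrictConvexOn ℝ (Set.Ioo (-1:ℝ) 1) (fun m => GR κ c m + F m) :=
    hGR.add_convexOn hF
  have part1 : StrictConvexOn ℝ (Set.Ioo (-1 : ℝ) 1)
      (fun m =>
        (⨅ θ ∈ Set.Icc (0 : ℝ) 1,
            (((-(κ * θ * c)) : ℝ) : EReal) + negXiE m θ c).toReal + F m) := by
    refine strictConvexOn_congr hsum fun m hm => ?_
    rw [toReal_iInf_eq hκ hc hm]
  refine ⟨part1, fun h => ?_⟩
  have hlin : ConvexOn ℝ (Set.Ioo (-1:ℝ) 1) (fun m => -(h * m)) := by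
    refine ⟨convex_Ioo _ _, fun x hx y hy a b ha hb hab => ?_⟩
    simp only [smul_eq_mul]
    apply le_of_eq
    ring
  exact hlin.add_strictConvexOn part1
end
end

section
/- Fix m ∈ (−1,1) and c ∈ (0,1). The function θ ↦ Ξ(m,θ;c) is strictly concave on the interval of θ ∈ [0,1] where it is finite, its derivative in θ vanishes at θ = (1+m)/2, and for every κ > 0 the function θ ↦ κθc + Ξ(m,θ;c) has a unique maximizer θ(m) in [0,1]; this maximizer satisfies θ(m) > (1+m)/2 and solves the equation (∂/∂θ) Ξ(m,θ;c) = −κc. -/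
open scoped BigOperators
open Filter

noncomputable section

/-- The interval of `θ ∈ [0,1]` on which `Ξ(m,·;c)` is finite. -/
def finInt (m c : ℝ) : Set ℝ :=
  {θ | θ ∈ Set.Icc (0 : ℝ) 1 ∧ pPlus m θ c ≤ 1 ∧ pMinus m θ c ≤ 1}

def XiD (m c θ : ℝ) : ℝ :=
  c * (Real.log (pMinus m θ c) - Real.log (1 - pMinus m θ c)
       - Real.log (pPlus m θ c) + Real.log (1 - pPlus m θ c))

def XiDD (m c θ : ℝ) : ℝ :=
  -(c * (2 * c / (1 - m) / pMinus m θ c + 2 * c / (1 - m) / (1 - pMinus m θ c)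
      + 2 * c / (1 + m) / pPlus m θ c + 2 * c / (1 + m) / (1 - pPlus m θ c)))

lemma entS_continuous : Continuous entS := by
  have h := Real.continuous_mul_log
  exact h.add (h.comp (continuous_const.sub continuous_id))

lemma mul_log_hasDerivAt {x : ℝ} (h0 : 0 < x) :
    HasDerivAt (fun x : ℝ => x * Real.log x) (Real.log x + 1) x := by
  have := (hasDerivAt_id x).mul (Real.hasDerivAt_log h0.ne')
  refine this.congr_deriv ?_
  simp [h0.ne']

lemma entS_hasDerivAt {p : ℝ} (h0 : 0 < p) (h1 : p < 1) :
    HasDerivAt entS (Real.log p - Real.log (1 - p)) p := by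
  have h1' : (0:ℝ) < 1 - p := by linarith
  have inner : HasDerivAt (fun x : ℝ => 1 - x) (-1) p := by
    exact (hasDerivAt_id' p).const_sub 1
  have d2 : HasDerivAt (fun x : ℝ => (1 - x) * Real.log (1 - x))
      ((Real.log (1 - p) + 1) * (-1)) p :=
    (mul_log_hasDerivAt h1').comp p inner
  have := (mul_log_hasDerivAt h0).add d2
  refine this.congr_deriv ?_
  ring

lemma pPlus_hasDerivAt (m c θ : ℝ) :
    HasDerivAt (fun θ => pPlus m θ c) (2 * c / (1 + m)) θ := by
  have h : (fun θ => pPlus m θ c) = fun θ : ℝ => θ * (2 * c / (1 + m)) := by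
    funext θ; rw [pPlus]; ring
  rw [h]
  simpa using (hasDerivAt_id θ).mul_const (2 * c / (1 + m))

lemma pMinus_hasDerivAt (m c θ : ℝ) :
    HasDerivAt (fun θ => pMinus m θ c) (-(2 * c / (1 - m))) θ := by
  have h : (fun θ => pMinus m θ c) = fun θ : ℝ => (1 - θ) * (2 * c / (1 - m)) := by
    funext θ; rw [pMinus]; ring
  rw [h]
  have inner : HasDerivAt (fun x : ℝ => 1 - x) (-1) θ := by
    exact (hasDerivAt_id' θ).const_sub 1
  simpa using inner.mul_const (2 * c / (1 - m))

lemma Xi_continuous (m c : ℝ) : Continuous (fun θ => Xi m θ c) := by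
  have hp : Continuous (fun θ => pPlus m θ c) := by unfold pPlus; fun_prop
  have hq : Continuous (fun θ => pMinus m θ c) := by unfold pMinus; fun_prop
  simp only [Xi]
  exact (continuous_const.mul (entS_continuous.comp hp)).sub
    (continuous_const.mul (entS_continuous.comp hq))

lemma Xi_hasDerivAt {m c θ : ℝ} (hm1 : 0 < 1 + m) (hm2 : 0 < 1 - m)
    (h1 : 0 < pPlus m θ c) (h2 : pPlus m θ c < 1)
    (h3 : 0 < pMinus m θ c) (h4 : pMinus m θ c < 1) :
    HasDerivAt (fun θ => Xi m θ c) (XiD m c θ) θ := by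
  have e1 : HasDerivAt (fun θ => entS (pPlus m θ c))
      ((Real.log (pPlus m θ c) - Real.log (1 - pPlus m θ c)) * (2 * c / (1 + m))) θ :=
    by have := (entS_hasDerivAt h1 h2).comp θ (pPlus_hasDerivAt m c θ); exact this
  have e2 : HasDerivAt (fun θ => entS (pMinus m θ c))
      ((Real.log (pMinus m θ c) - Real.log (1 - pMinus m θ c)) * (-(2 * c / (1 - m)))) θ :=
    by have := (entS_hasDerivAt h3 h4).comp θ (pMinus_hasDerivAt m c θ); exact this
  have := (e1.const_mul (-((1 + m) / 2))).sub (e2.const_mul ((1 - m) / 2))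
  have hXi : (fun θ => Xi m θ c)
      = fun θ => -((1 + m) / 2) * entS (pPlus m θ c) - (1 - m) / 2 * entS (pMinus m θ c) := by
    funext θ; rw [Xi]
  rw [hXi]
  refine this.congr_deriv ?_
  rw [XiD]
  field_simp
  ring

lemma XiD_hasDerivAt {m c θ : ℝ} (hm1 : 0 < 1 + m) (hm2 : 0 < 1 - m)
    (h1 : 0 < pPlus m θ c) (h2 : pPlus m θ c < 1)
    (h3 : 0 < pMinus m θ c) (h4 : pMinus m θ c < 1) :
    HasDerivAt (fun θ => XiD m c θ) (XiDD m c θ) θ := by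
  have h2' : (0:ℝ) < 1 - pPlus m θ c := by linarith
  have h4' : (0:ℝ) < 1 - pMinus m θ c := by linarith
  have l1 : HasDerivAt (fun θ => Real.log (pMinus m θ c))
      (-(2 * c / (1 - m)) / pMinus m θ c) θ :=
    (pMinus_hasDerivAt m c θ).log h3.ne'
  have l2 : HasDerivAt (fun θ => Real.log (1 - pMinus m θ c))
      ((0 - -(2 * c / (1 - m))) / (1 - pMinus m θ c)) θ :=
    (((hasDerivAt_const θ (1:ℝ)).sub (pMinus_hasDerivAt m c θ))).log h4'.ne'
  have l3 : HasDerivAt (fun θ => Real.log (pPlus m θ c))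
      (2 * c / (1 + m) / pPlus m θ c) θ :=
    (pPlus_hasDerivAt m c θ).log h1.ne'
  have l4 : HasDerivAt (fun θ => Real.log (1 - pPlus m θ c))
      ((0 - 2 * c / (1 + m)) / (1 - pPlus m θ c)) θ :=
    (((hasDerivAt_const θ (1:ℝ)).sub (pPlus_hasDerivAt m c θ))).log h2'.ne'
  have := (((l1.sub l2).sub l3).add l4).const_mul c
  have hXiD : (fun θ => XiD m c θ)
      = fun θ => c * (Real.log (pMinus m θ c) - Real.log (1 - pMinus m θ c)
       - Real.log (pPlus m θ c) + Real.log (1 - pPlus m θ c)) := by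
    funext θ; rw [XiD]
  rw [hXiD]
  refine this.congr_deriv ?_
  rw [XiDD]
  ring

lemma XiDD_neg {m c θ : ℝ} (hm1 : 0 < 1 + m) (hm2 : 0 < 1 - m) (hc0 : 0 < c)
    (h1 : 0 < pPlus m θ c) (h2 : pPlus m θ c < 1)
    (h3 : 0 < pMinus m θ c) (h4 : pMinus m θ c < 1) :
    XiDD m c θ < 0 := by
  have h2' : (0:ℝ) < 1 - pPlus m θ c := by linarith
  have h4' : (0:ℝ) < 1 - pMinus m θ c := by linarith
  have ha : (0:ℝ) < 2 * c / (1 + m) := by positivity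
  have hb : (0:ℝ) < 2 * c / (1 - m) := by positivity
  rw [XiDD, neg_lt_zero]
  have := div_pos hb h3
  have := div_pos hb h4'
  have := div_pos ha h1
  have := div_pos ha h2'
  positivity

set_option maxHeartbeats 1000000 in
/-- `θ ↦ Ξ(m,θ;c)` is strictly concave on the interval where it is
finite, its `θ`-derivative vanishes at `θ = (1+m)/2`, and for every `κ > 0` the function
`θ ↦ κθc + Ξ(m,θ;c)` has a unique maximizer `θ(m)`, which satisfies `θ(m) > (1+m)/2` and
solves `(∂/∂θ) Ξ(m,θ;c) = −κc`. -/
theorem statement11 (m c : ℝ) (hm : m ∈ Set.Ioo (-1 : ℝ) 1) (hc : c ∈ Set.Ioo (0 : ℝ) 1) :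
    StrictConcaveOn ℝ (finInt m c) (fun θ => Xi m θ c) ∧
    deriv (fun θ => Xi m θ c) ((1 + m) / 2) = 0 ∧
    ∀ κ : ℝ, 0 < κ →
      ∃ θ0 : ℝ, θ0 ∈ finInt m c ∧
        (∀ θ ∈ finInt m c, κ * θ * c + Xi m θ c ≤ κ * θ0 * c + Xi m θ0 c) ∧
        (∀ θ' ∈ finInt m c,
          (∀ θ ∈ finInt m c, κ * θ * c + Xi m θ c ≤ κ * θ' * c + Xi m θ' c) → θ' = θ0) ∧
        (1 + m) / 2 < θ0 ∧
        deriv (fun θ => Xi m θ c) θ0 = -(κ * c) := by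
  obtain ⟨hmlb, hmub⟩ := hm
  obtain ⟨hc0, hc1⟩ := hc
  have hm1 : (0:ℝ) < 1 + m := by linarith
  have hm2 : (0:ℝ) < 1 - m := by linarith
  have h2c : (0:ℝ) < 2 * c := by linarith
  set lo := max 0 (1 - (1 - m) / (2 * c)) with hlo_def
  set hi := min 1 ((1 + m) / (2 * c)) with hhi_def
  set μ := (1 + m) / 2 with hμ_def
  -- characterizations of the mole-fraction constraints
  have hPle : ∀ θ : ℝ, pPlus m θ c ≤ 1 ↔ θ ≤ (1 + m) / (2 * c) := by
    intro θ
    rw [pPlus, div_le_one hm1, le_div_iff₀ h2c]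
    constructor <;> intro h <;> nlinarith
  have hPlt : ∀ θ : ℝ, pPlus m θ c < 1 ↔ θ < (1 + m) / (2 * c) := by
    intro θ
    rw [pPlus, div_lt_one hm1, lt_div_iff₀ h2c]
    constructor <;> intro h <;> nlinarith
  have hPpos : ∀ θ : ℝ, 0 < pPlus m θ c ↔ 0 < θ := by
    intro θ
    rw [pPlus, div_pos_iff]
    constructor
    · rintro (⟨h, -⟩ | ⟨-, h⟩)
      · nlinarith
      · linarith
    · intro h
      exact Or.inl ⟨by nlinarith, hm1⟩
  have hMle : ∀ θ : ℝ, pMinus m θ c ≤ 1 ↔ 1 - (1 - m) / (2 * c) ≤ θ := by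
    intro θ
    rw [pMinus, div_le_one hm2, sub_le_comm, le_div_iff₀ h2c]
    constructor <;> intro h <;> nlinarith
  have hMlt : ∀ θ : ℝ, pMinus m θ c < 1 ↔ 1 - (1 - m) / (2 * c) < θ := by
    intro θ
    rw [pMinus, div_lt_one hm2, sub_lt_comm, lt_div_iff₀ h2c]
    constructor <;> intro h <;> nlinarith
  have hMpos : ∀ θ : ℝ, 0 < pMinus m θ c ↔ θ < 1 := by
    intro θ
    rw [pMinus, div_pos_iff]
    constructor
    · rintro (⟨h, -⟩ | ⟨-, h⟩)
      · nlinarith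
      · linarith
    · intro h
      exact Or.inl ⟨by nlinarith, hm2⟩
  have hfin : finInt m c = Set.Icc lo hi := by
    ext θ
    simp only [finInt, Set.mem_setOf_eq, Set.mem_Icc, hPle, hMle, hlo_def, hhi_def,
      le_min_iff, max_le_iff]
    tauto
  have hIoo : ∀ θ : ℝ, θ ∈ Set.Ioo lo hi ↔
      (0 < pPlus m θ c ∧ pPlus m θ c < 1 ∧ 0 < pMinus m θ c ∧ pMinus m θ c < 1) := by
    intro θ
    simp only [Set.mem_Ioo, hlo_def, hhi_def, max_lt_iff, lt_min_iff,
      hPpos, hPlt, hMpos, hMlt]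
    tauto
  have hPμ : pPlus m μ c = c := by
    rw [hμ_def, pPlus]
    field_simp
  have hMμ : pMinus m μ c = c := by
    rw [hμ_def, pMinus]
    field_simp
    ring
  have hμmem : μ ∈ Set.Ioo lo hi := by
    rw [hIoo, hPμ, hMμ]
    exact ⟨hc0, hc1, hc0, hc1⟩
  have hloμ : lo < μ := hμmem.1
  have hμhi : μ < hi := hμmem.2
  -- strict concavity
  have conc : StrictConcaveOn ℝ (finInt m c) (fun θ => Xi m θ c) := by
    rw [hfin]
    refine strictConcaveOn_of_deriv2_neg (convex_Icc lo hi)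
      ((Xi_continuous m c).continuousOn) ?_
    intro x hx
    rw [interior_Icc] at hx
    obtain ⟨p1, p2, p3, p4⟩ := (hIoo x).mp hx
    have hev : deriv (fun θ => Xi m θ c) =ᶠ[nhds x] (fun θ => XiD m c θ) := by
      filter_upwards [isOpen_Ioo.mem_nhds hx] with y hy
      obtain ⟨q1, q2, q3, q4⟩ := (hIoo y).mp hy
      exact (Xi_hasDerivAt hm1 hm2 q1 q2 q3 q4).deriv
    have h2 : deriv^[2] (fun θ => Xi m θ c) x = XiDD m c x := by
      show deriv (deriv fun θ => Xi m θ c) x = _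
      rw [hev.deriv_eq, (XiD_hasDerivAt hm1 hm2 p1 p2 p3 p4).deriv]
    rw [h2]
    exact XiDD_neg hm1 hm2 hc0 p1 p2 p3 p4
  -- derivative vanishes at μ
  have hXiDμ : XiD m c μ = 0 := by
    rw [XiD, hPμ, hMμ]
    ring
  obtain ⟨pμ1, pμ2, pμ3, pμ4⟩ := (hIoo μ).mp hμmem
  have deriv0 : deriv (fun θ => Xi m θ c) μ = 0 := by
    rw [(Xi_hasDerivAt hm1 hm2 pμ1 pμ2 pμ3 pμ4).deriv, hXiDμ]
  refine ⟨conc, deriv0, fun κ hκ => ?_⟩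
  -- existence of a point θ2 with large negative derivative
  set C := c * (-Real.log (1 - c) - Real.log c) with hC_def
  set L := (-(C + κ * c)) / c with hL_def
  have hε : (0:ℝ) < Real.exp L := Real.exp_pos L
  have hhcont : Continuous (fun θ => pMinus m θ c * (1 - pPlus m θ c)) := by
    unfold pPlus pMinus
    fun_prop
  have hh_hi : pMinus m hi c * (1 - pPlus m hi c) = 0 := by
    rcases min_choice (1:ℝ) ((1 + m) / (2 * c)) with h | h <;> rw [← hhi_def] at h
    · rw [h, pMinus]
      norm_num
    · have hone : pPlus m hi c = 1 := by
        rw [h, pPlus]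
        field_simp
      rw [hone]
      ring
  have htend : Filter.Tendsto (fun θ => pMinus m θ c * (1 - pPlus m θ c))
      (nhdsWithin hi (Set.Iio hi)) (nhds 0) := by
    have h := hhcont.tendsto hi
    rw [hh_hi] at h
    exact h.mono_left nhdsWithin_le_nhds
  have hev2 : ∀ᶠ θ in nhdsWithin hi (Set.Iio hi),
      pMinus m θ c * (1 - pPlus m θ c) < Real.exp L := htend.eventually_lt_const hε
  have hev3 : ∀ᶠ θ in nhdsWithin hi (Set.Iio hi), θ ∈ Set.Ioo μ hi :=
    Ioo_mem_nhdsLT_of_mem ⟨hμhi, le_refl hi⟩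
  obtain ⟨θ2, hθ2ε, hθ2mem⟩ := (hev2.and hev3).exists
  have hθ2Ioo : θ2 ∈ Set.Ioo lo hi := ⟨lt_trans hloμ hθ2mem.1, hθ2mem.2⟩
  obtain ⟨q1, q2, q3, q4⟩ := (hIoo θ2).mp hθ2Ioo
  -- g θ2 < 0
  have hp2 : c ≤ pPlus m θ2 c := by
    rw [pPlus, le_div_iff₀ hm1]
    nlinarith [mul_pos (sub_pos.mpr hθ2mem.1) hc0]
  have hm2' : pMinus m θ2 c ≤ c := by
    rw [pMinus, div_le_iff₀ hm2]
    nlinarith [mul_pos (sub_pos.mpr hθ2mem.1) hc0]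
  have b1 : Real.log (1 - c) ≤ Real.log (1 - pMinus m θ2 c) :=
    Real.log_le_log (by linarith) (by linarith)
  have b2 : Real.log c ≤ Real.log (pPlus m θ2 c) := Real.log_le_log hc0 hp2
  have hq2' : (0:ℝ) < 1 - pPlus m θ2 c := by linarith
  have hhpos : 0 < pMinus m θ2 c * (1 - pPlus m θ2 c) := mul_pos q3 hq2'
  have hlogmul : Real.log (pMinus m θ2 c * (1 - pPlus m θ2 c))
      = Real.log (pMinus m θ2 c) + Real.log (1 - pPlus m θ2 c) :=
    Real.log_mul q3.ne' hq2'.ne'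
  have hloglt : Real.log (pMinus m θ2 c * (1 - pPlus m θ2 c)) < L := by
    calc Real.log (pMinus m θ2 c * (1 - pPlus m θ2 c)) < Real.log (Real.exp L) :=
          Real.log_lt_log hhpos hθ2ε
      _ = L := Real.log_exp L
  have hcL : c * L = -(C + κ * c) := by
    rw [hL_def]
    field_simp
  have hgθ2neg : κ * c + XiD m c θ2 < 0 := by
    have inner : Real.log (pMinus m θ2 c) - Real.log (1 - pMinus m θ2 c)
        - Real.log (pPlus m θ2 c) + Real.log (1 - pPlus m θ2 c)
        ≤ Real.log (pMinus m θ2 c) + Real.log (1 - pPlus m θ2 c)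
          + (-Real.log (1 - c) - Real.log c) := by linarith
    have step1 : XiD m c θ2 ≤ c * (Real.log (pMinus m θ2 c) + Real.log (1 - pPlus m θ2 c)) + C := by
      rw [XiD, hC_def]
      linarith [mul_le_mul_of_nonneg_left inner hc0.le]
    have step2 : c * (Real.log (pMinus m θ2 c) + Real.log (1 - pPlus m θ2 c)) < c * L := by
      rw [← hlogmul]
      exact mul_lt_mul_of_pos_left hloglt hc0
    rw [hcL] at step2
    linarith
  -- intermediate value theorem for g on [μ, θ2]
  have hμθ2 : μ ≤ θ2 := le_of_lt hθ2mem.1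
  have hsub : Set.Icc μ θ2 ⊆ Set.Ioo lo hi := fun x hx =>
    ⟨lt_of_lt_of_le hloμ hx.1, lt_of_le_of_lt hx.2 hθ2mem.2⟩
  have hgcontIoo : ContinuousOn (fun θ => κ * c + XiD m c θ) (Set.Ioo lo hi) := by
    intro x hx
    obtain ⟨s1, s2, s3, s4⟩ := (hIoo x).mp hx
    exact (continuous_const.continuousAt.add
      (XiD_hasDerivAt hm1 hm2 s1 s2 s3 s4).continuousAt).continuousWithinAt
  have hivt := intermediate_value_Icc' hμθ2 (hgcontIoo.mono hsub)
  have h0mem : (0:ℝ) ∈ Set.Icc (κ * c + XiD m c θ2) (κ * c + XiD m c μ) := by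
    constructor
    · exact le_of_lt hgθ2neg
    · rw [hXiDμ]
      nlinarith
  obtain ⟨θ0, hθ0mem, hgθ0⟩ := hivt h0mem
  replace hgθ0 : κ * c + XiD m c θ0 = 0 := hgθ0
  have hθ0gtμ : μ < θ0 := by
    rcases eq_or_lt_of_le hθ0mem.1 with h | h
    · exfalso
      rw [← h, hXiDμ] at hgθ0
      nlinarith
    · exact h
  have hθ0lthi : θ0 < hi := lt_of_le_of_lt hθ0mem.2 hθ2mem.2
  have hθ0Ioo : θ0 ∈ Set.Ioo lo hi := hsub hθ0mem
  obtain ⟨r1, r2, r3, r4⟩ := (hIoo θ0).mp hθ0Ioo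
  have hloθ0 : lo < θ0 := lt_trans hloμ hθ0gtμ
  -- objective function and its derivative
  have hfcont : Continuous (fun θ => κ * θ * c + Xi m θ c) := by
    have h1 : Continuous (fun θ : ℝ => κ * θ * c) := by fun_prop
    exact h1.add (Xi_continuous m c)
  have hfd : ∀ x ∈ Set.Ioo lo hi,
      HasDerivAt (fun θ => κ * θ * c + Xi m θ c) (κ * c + XiD m c x) x := by
    intro x hx
    obtain ⟨s1, s2, s3, s4⟩ := (hIoo x).mp hx
    have hlin : HasDerivAt (fun θ : ℝ => κ * θ * c) (κ * c) x := by
      have he : (fun θ : ℝ => κ * θ * c) = fun θ : ℝ => θ * (κ * c) := by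
        funext θ; ring
      rw [he]
      simpa using (hasDerivAt_id x).mul_const (κ * c)
    exact hlin.add (Xi_hasDerivAt hm1 hm2 s1 s2 s3 s4)
  -- the derivative of the objective is strictly decreasing
  have hganti : StrictAntiOn (fun θ => κ * c + XiD m c θ) (Set.Ioo lo hi) := by
    refine strictAntiOn_of_deriv_neg (convex_Ioo lo hi) hgcontIoo ?_
    intro x hx
    rw [interior_Ioo] at hx
    obtain ⟨s1, s2, s3, s4⟩ := (hIoo x).mp hx
    have hgd : HasDerivAt (fun θ => κ * c + XiD m c θ) (XiDD m c x) x := by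
      simpa using (XiD_hasDerivAt hm1 hm2 s1 s2 s3 s4)
    rw [hgd.deriv]
    exact XiDD_neg hm1 hm2 hc0 s1 s2 s3 s4
  have hgpos : ∀ x ∈ Set.Ioo lo θ0, 0 < κ * c + XiD m c x := by
    intro x hx
    have hxIoo : x ∈ Set.Ioo lo hi := ⟨hx.1, lt_trans hx.2 hθ0lthi⟩
    have := hganti hxIoo hθ0Ioo hx.2
    simpa [hgθ0] using this
  have hgneg : ∀ x ∈ Set.Ioo θ0 hi, κ * c + XiD m c x < 0 := by
    intro x hx
    have hxIoo : x ∈ Set.Ioo lo hi := ⟨lt_trans hloθ0 hx.1, hx.2⟩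
    have := hganti hθ0Ioo hxIoo hx.1
    simpa [hgθ0] using this
  have hmono : StrictMonoOn (fun θ => κ * θ * c + Xi m θ c) (Set.Icc lo θ0) := by
    refine strictMonoOn_of_deriv_pos (convex_Icc lo θ0) hfcont.continuousOn ?_
    intro x hx
    rw [interior_Icc] at hx
    have hxIoo : x ∈ Set.Ioo lo hi := ⟨hx.1, lt_trans hx.2 hθ0lthi⟩
    rw [(hfd x hxIoo).deriv]
    exact hgpos x hx
  have hanti : StrictAntiOn (fun θ => κ * θ * c + Xi m θ c) (Set.Icc θ0 hi) := by
    refine strictAntiOn_of_deriv_neg (convex_Icc θ0 hi) hfcont.continuousOn ?_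
    intro x hx
    rw [interior_Icc] at hx
    have hxIoo : x ∈ Set.Ioo lo hi := ⟨lt_trans hloθ0 hx.1, hx.2⟩
    rw [(hfd x hxIoo).deriv]
    exact hgneg x hx
  have hmax : ∀ θ ∈ Set.Icc lo hi, θ ≠ θ0 →
      κ * θ * c + Xi m θ c < κ * θ0 * c + Xi m θ0 c := by
    intro θ hθ hne
    rcases lt_or_gt_of_ne hne with h | h
    · exact hmono ⟨hθ.1, le_of_lt h⟩ ⟨le_of_lt hloθ0, le_refl θ0⟩ h
    · exact hanti ⟨le_refl θ0, le_of_lt hθ0lthi⟩ ⟨le_of_lt h, hθ.2⟩ h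
  have hθ0fin : θ0 ∈ finInt m c := by
    rw [hfin]
    exact ⟨le_of_lt hloθ0, le_of_lt hθ0lthi⟩
  refine ⟨θ0, hθ0fin, ?_, ?_, hθ0gtμ, ?_⟩
  · intro θ hθ
    rcases eq_or_ne θ θ0 with h | h
    · rw [h]
    · exact le_of_lt (hmax θ (hfin ▸ hθ) h)
  · intro θ' hθ'fin hθ'max
    by_contra hne
    have h1 := hmax θ' (hfin ▸ hθ'fin) hne
    have h2 := hθ'max θ0 hθ0fin
    linarith
  · rw [(Xi_hasDerivAt hm1 hm2 r1 r2 r3 r4).deriv]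
    linarith
end
end

section
/- Let κ > 0. For every m ∈ (−1,1) and every c ∈ (0,1) there exists a unique pair (q_+, q_−) ∈ [0,1]² satisfying the two equations q_+/(1−q_+) = e^κ · q_−/(1−q_−) and q_+·(1+m)/2 + q_−·(1−m)/2 = c. -/
/-- For `κ > 0`, `m ∈ (−1,1)`, `c ∈ (0,1)` there is a unique pair
`(q_+, q_−) ∈ [0,1]²` with `q_+/(1−q_+) = e^κ q_−/(1−q_−)` (in cross-multiplied form,
so that `q_+ = 1` corresponds to `q_− = 1`) and `q_+(1+m)/2 + q_−(1−m)/2 = c`. -/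
theorem statement12 (κ : ℝ) (hκ : 0 < κ) :
    ∀ m ∈ Set.Ioo (-1 : ℝ) 1, ∀ c ∈ Set.Ioo (0 : ℝ) 1,
      ∃! q : ℝ × ℝ,
        q.1 ∈ Set.Icc (0 : ℝ) 1 ∧ q.2 ∈ Set.Icc (0 : ℝ) 1 ∧
        q.1 * (1 - q.2) = Real.exp κ * (q.2 * (1 - q.1)) ∧
        q.1 * (1 + m) / 2 + q.2 * (1 - m) / 2 = c := by
  intro m hm c hc
  obtain ⟨hm1, hm2⟩ := hm
  obtain ⟨hc1, hc2⟩ := hc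
  set E := Real.exp κ with hEdef
  have hE : 1 < E := by
    have := Real.add_one_le_exp κ
    simp only [hEdef]; linarith
  have hE0 : E ≠ 0 := by positivity
  set f : ℝ → ℝ := fun t => E * t / (1 + (E - 1) * t) with hf
  have hD : ∀ t : ℝ, 0 ≤ t → 0 < 1 + (E - 1) * t := fun t ht => by nlinarith
  set g : ℝ → ℝ := fun t => f t * (1 + m) / 2 + t * (1 - m) / 2 with hg
  have hfmem : ∀ t ∈ Set.Icc (0 : ℝ) 1, f t ∈ Set.Icc (0 : ℝ) 1 := by
    rintro t ⟨ht0, ht1⟩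
    constructor
    · exact div_nonneg (by nlinarith) (hD t ht0).le
    · rw [hf]; dsimp only
      rw [div_le_one (hD t ht0)]
      nlinarith
  have hmono : StrictMonoOn g (Set.Icc (0 : ℝ) 1) := by
    rintro s ⟨hs0, hs1⟩ t ⟨ht0, ht1⟩ hst
    have hfs : f s ≤ f t := by
      rw [hf]; dsimp only
      rw [div_le_div_iff₀ (hD s hs0) (hD t ht0)]
      nlinarith
    simp only [hg]
    nlinarith
  have hcont : ContinuousOn g (Set.Icc (0 : ℝ) 1) := by
    apply ContinuousOn.add
    · apply ContinuousOn.div_const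
      apply ContinuousOn.mul _ continuousOn_const
      apply ContinuousOn.div (by fun_prop) (by fun_prop)
      rintro t ⟨ht0, _⟩
      exact (hD t ht0).ne'
    · fun_prop
  have hg0 : g 0 = 0 := by simp [hg, hf]
  have hg1 : g 1 = 1 := by
    simp only [hg, hf]
    rw [show (1 : ℝ) + (E - 1) * 1 = E from by ring, mul_one, div_self hE0]
    ring
  have hivt := intermediate_value_Icc (by norm_num : (0 : ℝ) ≤ 1) hcont
  rw [hg0, hg1] at hivt
  obtain ⟨t, ht, hgt⟩ := hivt ⟨hc1.le, hc2.le⟩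
  refine ⟨(f t, t), ⟨hfmem t ht, ht, ?_, ?_⟩, ?_⟩
  · -- cross equation
    show f t * (1 - t) = E * (t * (1 - f t))
    have hDt := hD t ht.1
    rw [hf]; dsimp only
    field_simp
    have hD' : 1 - t + t * E ≠ 0 := (by nlinarith : 0 < 1 - t + t * E).ne'
    linear_combination t * mul_inv_cancel₀ hD'
  · exact hgt
  · rintro ⟨p, q⟩ ⟨hp, hq, hcr, hsum⟩
    have hDq := hD q hq.1
    have hpfq : p = f q := by
      rw [hf]; dsimp only
      rw [eq_div_iff hDq.ne']
      linear_combination hcr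
    have hgq : g q = c := by
      simp only [hg, ← hpfq]
      exact hsum
    obtain rfl : q = t := hmono.injOn hq ht (hgq.trans hgt.symm)
    rw [Prod.mk.injEq]
    exact ⟨hpfq, rfl⟩
end

section
/- Fix κ > 0 and m ∈ (−1,1). For c ∈ (0,1) let (q_+(c), q_−(c)) be the unique solution in [0,1]² of q_+/(1−q_+) = e^κ · q_−/(1−q_−) and q_+·(1+m)/2 + q_−·(1−m)/2 = c, and define h(c) = (1/2) log((1−q_+(c))/(1−q_−(c))). Then c ↦ q_+(c) and c ↦ q_−(c) are strictly increasing on (0,1), c ↦ h(c) is strictly decreasing on (0,1), h(c) < 0 for every c ∈ (0,1), and h(c) → 0 as c ↓ 0. -/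
open Filter

/-- (Proof of Proposition 2.2 of the paper.) If `(q_+(c), q_−(c))` solves
the mole-fraction equations for each `c ∈ (0,1)` and
`h(c) = ½ log((1−q_+(c))/(1−q_−(c)))`, then `q_±` are strictly increasing, `h` is strictly
decreasing and negative on `(0,1)`, and `h(c) → 0` as `c ↓ 0`. -/
theorem statement14 (κ m : ℝ) (hκ : 0 < κ) (hm : m ∈ Set.Ioo (-1 : ℝ) 1)
    (qp qm : ℝ → ℝ)
    (hq : ∀ c ∈ Set.Ioo (0 : ℝ) 1,
      qp c ∈ Set.Icc (0 : ℝ) 1 ∧ qm c ∈ Set.Icc (0 : ℝ) 1 ∧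
      qp c * (1 - qm c) = Real.exp κ * (qm c * (1 - qp c)) ∧
      qp c * (1 + m) / 2 + qm c * (1 - m) / 2 = c) :
    StrictMonoOn qp (Set.Ioo (0 : ℝ) 1) ∧
    StrictMonoOn qm (Set.Ioo (0 : ℝ) 1) ∧
    StrictAntiOn (fun c => (1 / 2) * Real.log ((1 - qp c) / (1 - qm c)))
      (Set.Ioo (0 : ℝ) 1) ∧
    (∀ c ∈ Set.Ioo (0 : ℝ) 1, (1 / 2) * Real.log ((1 - qp c) / (1 - qm c)) < 0) ∧
    Tendsto (fun c => (1 / 2) * Real.log ((1 - qp c) / (1 - qm c)))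
      (nhdsWithin 0 (Set.Ioi 0)) (nhds 0) := by
  obtain ⟨hm1, hm2⟩ := hm
  set E := Real.exp κ with hEdef
  have hE1 : 1 < E := by
    rw [hEdef, show (1:ℝ) = Real.exp 0 by simp]
    exact Real.exp_lt_exp.mpr hκ
  have hE0 : 0 < E := lt_trans one_pos hE1
  -- pointwise facts
  have key : ∀ c ∈ Set.Ioo (0:ℝ) 1, 0 < qp c ∧ qp c < 1 ∧ 0 < qm c ∧ qm c < 1 ∧
      qm c * (qp c + E * (1 - qp c)) = qp c := by
    intro c hc
    obtain ⟨⟨ha0, ha1⟩, ⟨hb0, hb1⟩, heq, hsum⟩ := hq c hc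
    obtain ⟨hc0, hc1⟩ := hc
    have hkey : qm c * (qp c + E * (1 - qp c)) = qp c := by linear_combination -heq
    have hb0' : 0 < qm c := by
      rcases lt_or_eq_of_le hb0 with h | h
      · exact h
      · exfalso
        rw [← h] at heq hsum
        have ha' : qp c = 0 := by linear_combination heq
        rw [ha'] at hsum
        linarith
    have ha0' : 0 < qp c := by
      rcases lt_or_eq_of_le ha0 with h | h
      · exact h
      · exfalso
        rw [← h] at hkey
        have : qm c * E = 0 := by linear_combination hkey
        nlinarith
    have ha1' : qp c < 1 := by
      rcases lt_or_eq_of_le ha1 with h | h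
      · exact h
      · exfalso
        rw [h] at heq hsum
        have hb' : qm c = 1 := by linear_combination -heq
        rw [hb'] at hsum
        linarith
    have hb1' : qm c < 1 := by
      rcases lt_or_eq_of_le hb1 with h | h
      · exact h
      · exfalso
        rw [h] at hkey
        have : E * (1 - qp c) = 0 := by linear_combination hkey
        nlinarith
    exact ⟨ha0', ha1', hb0', hb1', hkey⟩
  -- comparison lemma
  have comp : ∀ c₁ ∈ Set.Ioo (0:ℝ) 1, ∀ c₂ ∈ Set.Ioo (0:ℝ) 1,
      (qm c₁ - qm c₂) * ((qp c₁ + E * (1 - qp c₁)) * (qp c₂ + E * (1 - qp c₂)))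
        = E * (qp c₁ - qp c₂) := by
    intro c₁ hc₁ c₂ hc₂
    obtain ⟨_, _, _, _, h1⟩ := key c₁ hc₁
    obtain ⟨_, _, _, _, h2⟩ := key c₂ hc₂
    linear_combination (qp c₂ + E * (1 - qp c₂)) * h1 - (qp c₁ + E * (1 - qp c₁)) * h2
  have hD : ∀ c ∈ Set.Ioo (0:ℝ) 1, 0 < qp c + E * (1 - qp c) := by
    intro c hc
    obtain ⟨h1, h2, _, _, _⟩ := key c hc
    nlinarith
  have mono_p : StrictMonoOn qp (Set.Ioo (0:ℝ) 1) := by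
    intro c₁ hc₁ c₂ hc₂ hlt
    by_contra h
    push_neg at h
    have hcmp := comp c₂ hc₂ c₁ hc₁
    have hD1 := hD c₁ hc₁
    have hD2 := hD c₂ hc₂
    have hb : qm c₂ ≤ qm c₁ := by
      by_contra hb'
      push_neg at hb'
      nlinarith [mul_pos (sub_pos.mpr hb') (mul_pos hD2 hD1),
        mul_nonneg (le_of_lt hE0) (sub_nonneg.mpr h)]
    obtain ⟨_, _, _, hsum1⟩ := hq c₁ hc₁
    obtain ⟨_, _, _, hsum2⟩ := hq c₂ hc₂
    nlinarith [mul_nonneg (sub_nonneg.mpr h) (by linarith : (0:ℝ) ≤ 1 + m),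
      mul_nonneg (sub_nonneg.mpr hb) (by linarith : (0:ℝ) ≤ 1 - m)]
  have mono_m : StrictMonoOn qm (Set.Ioo (0:ℝ) 1) := by
    intro c₁ hc₁ c₂ hc₂ hlt
    by_contra h
    push_neg at h
    have hcmp := comp c₂ hc₂ c₁ hc₁
    have hD1 := hD c₁ hc₁
    have hD2 := hD c₂ hc₂
    have ha : qp c₂ ≤ qp c₁ := by
      by_contra ha'
      push_neg at ha'
      nlinarith [mul_nonpos_of_nonpos_of_nonneg
        (by linarith : qm c₂ - qm c₁ ≤ 0) (le_of_lt (mul_pos hD2 hD1)),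
        mul_pos hE0 (sub_pos.mpr ha')]
    obtain ⟨_, _, _, hsum1⟩ := hq c₁ hc₁
    obtain ⟨_, _, _, hsum2⟩ := hq c₂ hc₂
    nlinarith [mul_nonneg (sub_nonneg.mpr ha) (by linarith : (0:ℝ) ≤ 1 + m),
      mul_nonneg (sub_nonneg.mpr h) (by linarith : (0:ℝ) ≤ 1 - m)]
  -- ratio identity
  have ratio : ∀ c ∈ Set.Ioo (0:ℝ) 1,
      (1 - qp c) / (1 - qm c) = 1 - qp c * (1 - 1/E) := by
    intro c hc
    obtain ⟨_, _, _, hb1, hkey⟩ := key c hc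
    have hb1' : (0:ℝ) < 1 - qm c := by linarith
    have hE0' : E ≠ 0 := ne_of_gt hE0
    field_simp
    linear_combination hkey
  have hkpos : 0 < 1 - 1/E := by
    have : 1/E < 1 := by
      rw [div_lt_one hE0]; exact hE1
    linarith
  have hklt : 1 - 1/E < 1 := by
    have : 0 < 1/E := by positivity
    linarith
  have ratio_pos : ∀ c ∈ Set.Ioo (0:ℝ) 1, 0 < 1 - qp c * (1 - 1/E) := by
    intro c hc
    obtain ⟨h1, h2, _, _, _⟩ := key c hc
    nlinarith
  have ratio_lt : ∀ c ∈ Set.Ioo (0:ℝ) 1, 1 - qp c * (1 - 1/E) < 1 := by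
    intro c hc
    obtain ⟨h1, _, _, _, _⟩ := key c hc
    nlinarith
  have anti_h : StrictAntiOn (fun c => (1 / 2) * Real.log ((1 - qp c) / (1 - qm c)))
      (Set.Ioo (0:ℝ) 1) := by
    intro c₁ hc₁ c₂ hc₂ hlt
    simp only
    rw [ratio c₁ hc₁, ratio c₂ hc₂]
    have hp := mono_p hc₁ hc₂ hlt
    have h1 := ratio_pos c₂ hc₂
    have hle : 1 - qp c₂ * (1 - 1/E) < 1 - qp c₁ * (1 - 1/E) := by nlinarith
    have := Real.log_lt_log h1 hle
    linarith
  have neg_h : ∀ c ∈ Set.Ioo (0:ℝ) 1,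
      (1 / 2) * Real.log ((1 - qp c) / (1 - qm c)) < 0 := by
    intro c hc
    rw [ratio c hc]
    have := Real.log_neg (ratio_pos c hc) (ratio_lt c hc)
    linarith
  refine ⟨mono_p, mono_m, anti_h, neg_h, ?_⟩
  -- limit as c → 0⁺
  have hmem : Set.Ioo (0:ℝ) 1 ∈ nhdsWithin 0 (Set.Ioi 0) :=
    Ioo_mem_nhdsGT_of_mem ⟨le_refl 0, one_pos⟩
  have hup : Tendsto qp (nhdsWithin 0 (Set.Ioi 0)) (nhds 0) := by
    have hm0 : 0 < 1 + m := by linarith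
    refine tendsto_of_tendsto_of_tendsto_of_le_of_le' (g := fun _ => (0:ℝ))
      (h := fun c => 2 * c / (1 + m)) tendsto_const_nhds ?_ ?_ ?_
    · have : Tendsto (fun c : ℝ => 2 * c / (1 + m)) (nhds 0) (nhds (2 * 0 / (1 + m))) := by
        exact ((continuous_const.mul continuous_id).div_const (1 + m)).tendsto 0
      rw [show 2 * (0:ℝ) / (1 + m) = 0 by ring] at this
      exact this.mono_left nhdsWithin_le_nhds
    · filter_upwards [hmem] with c hc
      exact le_of_lt (key c hc).1
    · filter_upwards [hmem] with c hc
      obtain ⟨_, _, hb0, hb1, _⟩ := key c hc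
      obtain ⟨_, _, _, hsum⟩ := hq c hc
      rw [le_div_iff₀ hm0]
      nlinarith
  have h1 : Tendsto (fun c => 1 - qp c * (1 - 1/E)) (nhdsWithin 0 (Set.Ioi 0)) (nhds 1) := by
    have := (hup.mul_const (1 - 1/E)).const_sub 1
    simpa using this
  have h2 : Tendsto (fun c => (1/2) * Real.log (1 - qp c * (1 - 1/E)))
      (nhdsWithin 0 (Set.Ioi 0)) (nhds 0) := by
    have hlog := (Real.continuousAt_log one_ne_zero).tendsto.comp h1
    rw [Real.log_one] at hlog
    have := hlog.const_mul (1/2 : ℝ)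
    simpa using this
  apply h2.congr'
  filter_upwards [hmem] with c hc
  rw [ratio c hc]
end
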